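/- (Nagel's identity) Let N > 0 be real and n ∈ ℕ. Then for every X ∈ ℝ, H_n^N(X) = (n!/N^{n/2}) · (1 + X²/N)^{n/2} · C_n^N( (X/√N) / √(1 + X²/N) ). (Note that (X/√N)/√(1+X²/N) ∈ (−1, 1), so the right-hand side is well defined.) -/

import Mathlib

open Real MeasureTheory Filter
open Set

/-- Relativistic Hermite polynomial via its Rodrigues formula. -/
noncomputable def relHermite (n : ℕ) (N : ℝ) (X : ℝ) : ℝ :=
  (-1 : ℝ)^n * (1 + X^2/N)^(N + (n : ℝ)) *
    iteratedDeriv n (fun t : ℝ => (1 + t^2/N)^(-N)) X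

/-- Cariñena polynomial with positive parameter via its Rodrigues formula. -/
noncomputable def carinenaPos (n : ℕ) (𝒩 : ℝ) (X : ℝ) : ℝ :=
  (-1 : ℝ)^n * (1 + X^2/𝒩)^(𝒩 + 1/2) *
    iteratedDeriv n (fun t : ℝ => (1 + t^2/𝒩)^((n : ℝ) - 𝒩 - 1/2)) X

/-- Cariñena polynomial with negative parameter 𝒩 = -ν via its Rodrigues formula. -/
noncomputable def carinenaNeg (n : ℕ) (ν : ℝ) (X : ℝ) : ℝ :=
  (-1 : ℝ)^n * (1 - X^2/ν)^((1:ℝ)/2 - ν) *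
    iteratedDeriv n (fun t : ℝ => (1 - t^2/ν)^((n : ℝ) + ν - 1/2)) X

/-- The constant α_{n,ν} = (2ν)_n / (2^n n! (ν+1/2)_n). -/
noncomputable def alphaConst (n : ℕ) (ν : ℝ) : ℝ :=
  (ascPochhammer ℝ n).eval (2*ν) /
    (2^n * (n.factorial : ℝ) * (ascPochhammer ℝ n).eval (ν + 1/2))

/-- Gegenbauer polynomial via its Rodrigues formula. -/
noncomputable def gegenbauer (n : ℕ) (ν : ℝ) (X : ℝ) : ℝ :=
  alphaConst n ν * (-1 : ℝ)^n * (1 - X^2)^((1:ℝ)/2 - ν) *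
    iteratedDeriv n (fun t : ℝ => (1 - t^2)^((n : ℝ) + ν - 1/2)) X


private lemma iterDeriv_const_mul_fun (c : ℝ) (f : ℝ → ℝ) (n : ℕ) :
    iteratedDeriv n (fun t => c * f t) = fun x => c * iteratedDeriv n f x := by
  induction n with
  | zero => simp
  | succ n ih =>
    funext x
    rw [iteratedDeriv_succ, ih, iteratedDeriv_succ]
    exact deriv_const_mul_field c

private lemma contDiffOn_iterDeriv {f : ℝ → ℝ} {s : Set ℝ} (hs : IsOpen s)
    (hf : ContDiffOn ℝ ⊤ f s) (k : ℕ) : ContDiffOn ℝ ⊤ (iteratedDeriv k f) s := by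
  induction k with
  | zero => simpa using hf
  | succ k ih => rw [iteratedDeriv_succ]; exact ih.deriv_of_isOpen hs le_top

private lemma diffAt_iterDeriv {f : ℝ → ℝ} {s : Set ℝ} (hs : IsOpen s)
    (hf : ContDiffOn ℝ ⊤ f s) (k : ℕ) {x : ℝ} (hx : x ∈ s) :
    DifferentiableAt ℝ (iteratedDeriv k f) x :=
  ((contDiffOn_iterDeriv hs hf k).contDiffAt (hs.mem_nhds hx)).differentiableAt (by simp)

private lemma hasDerivAt_iterDeriv {f : ℝ → ℝ} {s : Set ℝ} (hs : IsOpen s)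
    (hf : ContDiffOn ℝ ⊤ f s) (k : ℕ) {x : ℝ} (hx : x ∈ s) :
    HasDerivAt (iteratedDeriv k f) (iteratedDeriv (k+1) f x) x := by
  rw [iteratedDeriv_succ]
  exact (diffAt_iterDeriv hs hf k hx).hasDerivAt

/-- the inner Gegenbauer Rodrigues function -/
private noncomputable def Gf (N : ℝ) (m : ℕ) : ℝ → ℝ :=
  fun t : ℝ => (1 - t^2) ^ ((m : ℝ) + N - 1/2)

private lemma mem_Ioo_pos {x : ℝ} (hx : x ∈ Ioo (-1:ℝ) 1) : 0 < 1 - x^2 := by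
  obtain ⟨h1, h2⟩ := hx; nlinarith

private lemma Gf_contDiffOn (N : ℝ) (m : ℕ) : ContDiffOn ℝ ⊤ (Gf N m) (Ioo (-1:ℝ) 1) :=
  fun x hx => (((contDiff_const.sub (contDiff_id.pow 2)).contDiffAt).rpow_const_of_ne
    (mem_Ioo_pos hx).ne').contDiffWithinAt

private lemma Gf_hasDerivAt (N : ℝ) (m : ℕ) {x : ℝ} (hx : (1:ℝ) - x^2 ≠ 0) :
    HasDerivAt (Gf N m) ((-(2*x)) * ((m:ℝ) + N - 1/2) * (1 - x^2) ^ ((m:ℝ) + N - 1/2 - 1)) x := by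
  have hb : HasDerivAt (fun t : ℝ => 1 - t^2) (-(2*x)) x := by
    simpa using ((hasDerivAt_pow 2 x).const_sub 1)
  exact hb.rpow_const (Or.inl hx)

private lemma deriv_Gf_succ (N : ℝ) (m : ℕ) {x : ℝ} (hx : (1:ℝ) - x^2 ≠ 0) :
    deriv (Gf N (m+1)) x = (-(2*(m:ℝ) + 2*N + 1)) * (x * Gf N m x) := by
  rw [(Gf_hasDerivAt N (m+1) hx).deriv]
  have he : ((m+1:ℕ):ℝ) + N - 1/2 - 1 = (m:ℝ) + N - 1/2 := by push_cast; ring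
  rw [he]
  unfold Gf
  push_cast
  ring

private lemma Gf_ode (N : ℝ) (m : ℕ) {x : ℝ} (hx : 0 < 1 - x^2) :
    (1 - x^2) * deriv (Gf N m) x = (-(2*(m:ℝ) + 2*N - 1)) * x * Gf N m x := by
  rw [(Gf_hasDerivAt N m hx.ne').deriv]
  have key : (1 - x^2) * (1 - x^2) ^ ((m:ℝ) + N - 1/2 - 1) = (1 - x^2) ^ ((m:ℝ) + N - 1/2) := by
    nth_rewrite 2 [show (m:ℝ) + N - 1/2 = ((m:ℝ) + N - 1/2 - 1) + 1 by ring]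
    rw [Real.rpow_add_one hx.ne']
    ring
  unfold Gf
  calc (1 - x^2) * ((-(2*x)) * ((m:ℝ) + N - 1/2) * (1 - x^2) ^ ((m:ℝ) + N - 1/2 - 1))
      = (-(2*x)) * ((m:ℝ) + N - 1/2) * ((1 - x^2) * (1 - x^2) ^ ((m:ℝ) + N - 1/2 - 1)) := by ring
    _ = (-(2*x)) * ((m:ℝ) + N - 1/2) * (1 - x^2) ^ ((m:ℝ) + N - 1/2) := by rw [key]
    _ = (-(2*(m:ℝ) + 2*N - 1)) * x * (1 - x^2) ^ ((m:ℝ) + N - 1/2) := by ring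

private lemma Gf_leibniz_ode (N : ℝ) (m : ℕ) (k : ℕ) : ∀ x ∈ Ioo (-1:ℝ) 1,
    (1 - x^2) * iteratedDeriv (k+1) (Gf N m) x
      + (2*(m:ℝ) + 2*N - 1 - 2*(k:ℝ)) * x * iteratedDeriv k (Gf N m) x
      + (k:ℝ) * (2*(m:ℝ) + 2*N - (k:ℝ)) * iteratedDeriv (k-1) (Gf N m) x = 0 := by
  induction k with
  | zero =>
    intro x hx
    have h := Gf_ode N m (mem_Ioo_pos hx)
    simp only [zero_add, Nat.cast_zero, iteratedDeriv_one, iteratedDeriv_zero, Nat.zero_sub]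
    linear_combination h
  | succ k ih =>
    intro x hx
    have hA : ∀ j, HasDerivAt (iteratedDeriv j (Gf N m)) (iteratedDeriv (j+1) (Gf N m) x) x :=
      fun j => hasDerivAt_iterDeriv isOpen_Ioo (Gf_contDiffOn N m) j hx
    have h1 : HasDerivAt (fun y : ℝ => (1:ℝ) - y^2) (-(2*x)) x := by
      simpa using ((hasDerivAt_pow 2 x).const_sub 1)
    have hCy : HasDerivAt (fun y : ℝ => (2*(m:ℝ) + 2*N - 1 - 2*(k:ℝ)) * y)
        (2*(m:ℝ) + 2*N - 1 - 2*(k:ℝ)) x := by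
      simpa using (hasDerivAt_id x).const_mul (2*(m:ℝ) + 2*N - 1 - 2*(k:ℝ))
    have htot := ((h1.mul (hA (k+1))).add (hCy.mul (hA k))).add
      ((hA (k-1)).const_mul ((k:ℝ) * (2*(m:ℝ) + 2*N - (k:ℝ))))
    have heq : (fun y => (1 - y^2) * iteratedDeriv (k+1) (Gf N m) y
        + (2*(m:ℝ) + 2*N - 1 - 2*(k:ℝ)) * y * iteratedDeriv k (Gf N m) y
        + (k:ℝ) * (2*(m:ℝ) + 2*N - (k:ℝ)) * iteratedDeriv (k-1) (Gf N m) y)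
        =ᶠ[nhds x] (fun _ => (0:ℝ)) :=
      Filter.eventuallyEq_of_mem (isOpen_Ioo.mem_nhds hx) ih
    have hE : (-(2*x) * iteratedDeriv (k+1) (Gf N m) x
        + (1 - x^2) * iteratedDeriv (k+1+1) (Gf N m) x
        + ((2*(m:ℝ) + 2*N - 1 - 2*(k:ℝ)) * iteratedDeriv k (Gf N m) x
          + (2*(m:ℝ) + 2*N - 1 - 2*(k:ℝ)) * x * iteratedDeriv (k+1) (Gf N m) x))
        + (k:ℝ) * (2*(m:ℝ) + 2*N - (k:ℝ)) * iteratedDeriv (k-1+1) (Gf N m) x = 0 := by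
      rw [← htot.deriv]; exact heq.deriv_eq.trans (by simp)
    have hidx : (k:ℝ) * (2*(m:ℝ) + 2*N - (k:ℝ)) * iteratedDeriv (k-1+1) (Gf N m) x
        = (k:ℝ) * (2*(m:ℝ) + 2*N - (k:ℝ)) * iteratedDeriv k (Gf N m) x := by
      cases k with
      | zero => simp
      | succ j => rfl
    rw [hidx] at hE
    have hk1 : (k+1) - 1 = k := rfl
    rw [hk1]
    push_cast
    linear_combination hE

private lemma iterDeriv_id_mul {f : ℝ → ℝ} (hf : ContDiffOn ℝ ⊤ f (Ioo (-1:ℝ) 1)) (k : ℕ) :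
    ∀ x ∈ Ioo (-1:ℝ) 1, iteratedDeriv k (fun t => t * f t) x
      = x * iteratedDeriv k f x + (k:ℝ) * iteratedDeriv (k-1) f x := by
  induction k with
  | zero => intro x hx; simp
  | succ k ih =>
    intro x hx
    rw [iteratedDeriv_succ]
    have heq : iteratedDeriv k (fun t => t * f t)
        =ᶠ[nhds x] (fun y => y * iteratedDeriv k f y + (k:ℝ) * iteratedDeriv (k-1) f y) :=
      Filter.eventuallyEq_of_mem (isOpen_Ioo.mem_nhds hx) ih
    rw [heq.deriv_eq]
    have hA : ∀ j, HasDerivAt (iteratedDeriv j f) (iteratedDeriv (j+1) f x) x :=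
      fun j => hasDerivAt_iterDeriv isOpen_Ioo hf j hx
    have htot := ((hasDerivAt_id' x).mul (hA k)).add ((hA (k-1)).const_mul (k:ℝ))
    erw [htot.deriv]
    have hidx : (k:ℝ) * iteratedDeriv (k-1+1) f x = (k:ℝ) * iteratedDeriv k f x := by
      cases k with
      | zero => simp
      | succ j => rfl
    rw [hidx]
    have hk1 : (k+1) - 1 = k := rfl
    rw [hk1]
    push_cast
    ring

private lemma Gf_B (N : ℝ) (m : ℕ) : ∀ x ∈ Ioo (-1:ℝ) 1,
    iteratedDeriv (m+1) (Gf N (m+1)) x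
      = (-(2*(m:ℝ) + 2*N + 1)) * (x * iteratedDeriv m (Gf N m) x
          + (m:ℝ) * iteratedDeriv (m-1) (Gf N m) x) := by
  intro x hx
  rw [iteratedDeriv_succ']
  have hcong : Set.EqOn (deriv (Gf N (m+1)))
      (fun t => (-(2*(m:ℝ) + 2*N + 1)) * (t * Gf N m t)) (Ioo (-1:ℝ) 1) :=
    fun y hy => deriv_Gf_succ N m (mem_Ioo_pos hy).ne'
  rw [hcong.iteratedDeriv_of_isOpen isOpen_Ioo m hx, iterDeriv_const_mul_fun]
  beta_reduce
  rw [iterDeriv_id_mul (Gf_contDiffOn N m) m x hx]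

private lemma poch_pos {x : ℝ} (hx : 0 < x) (n : ℕ) : 0 < (ascPochhammer ℝ n).eval x := by
  induction n with
  | zero => simp
  | succ n ih => rw [ascPochhammer_succ_eval]; exact mul_pos ih (by positivity)

private lemma alpha_succ (N : ℝ) (hN : 0 < N) (n : ℕ) :
    alphaConst (n+1) N = alphaConst n N * (2*N + n) / (2*((n:ℝ)+1)*(N + 1/2 + n)) := by
  unfold alphaConst
  rw [ascPochhammer_succ_eval, ascPochhammer_succ_eval, Nat.factorial_succ]
  have h1 : (0:ℝ) < (ascPochhammer ℝ n).eval (N + 1/2) := poch_pos (by linarith) n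
  have h2 : (0:ℝ) < N + 1/2 + n := by positivity
  have h3 : (0:ℝ) < (n.factorial : ℝ) := by positivity
  push_cast
  field_simp
  ring

private lemma alpha_zero (N : ℝ) : alphaConst 0 N = 1 := by
  simp [alphaConst]

private lemma y_mem (N : ℝ) (hN : 0 < N) (X : ℝ) :
    X / Real.sqrt (N + X^2) ∈ Ioo (-1:ℝ) 1 := by
  have hq : (0:ℝ) < N + X^2 := by positivity
  have hsq : 0 < Real.sqrt (N + X^2) := Real.sqrt_pos.mpr hq
  have habs : |X| < Real.sqrt (N + X^2) := by
    rw [← Real.sqrt_sq_eq_abs]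
    exact Real.sqrt_lt_sqrt (sq_nonneg X) (by linarith)
  have h := abs_lt.mp habs
  constructor
  · rw [lt_div_iff₀ hsq]; linarith [h.1]
  · rw [div_lt_one hsq]; linarith [h.2]

private lemma y_sq (N : ℝ) (hN : 0 < N) (X : ℝ) :
    (1 - (X / Real.sqrt (N + X^2))^2) * (1 + X^2/N) = 1 := by
  have hq : (0:ℝ) < N + X^2 := by positivity
  rw [div_pow, Real.sq_sqrt hq.le]
  field_simp
  ring

private lemma main_lemma (N : ℝ) (hN : 0 < N) :
    ∀ (n : ℕ) (X : ℝ),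
      iteratedDeriv n (fun t : ℝ => (1 + t^2/N)^(-N)) X
        = ((n.factorial : ℝ) * alphaConst n N / N ^ ((n:ℝ)/2))
            * ((1 + X^2/N) ^ (-(((n:ℝ)+1)/2))
              * iteratedDeriv n (Gf N n) (X / Real.sqrt (N + X^2))) := by
  intro n
  induction n with
  | zero =>
    intro X
    have hu : (0:ℝ) < 1 + X^2/N := by positivity
    have h1y : 1 - (X / Real.sqrt (N + X^2))^2 = (1 + X^2/N)⁻¹ :=
      eq_inv_of_mul_eq_one_left (y_sq N hN X)
    simp only [iteratedDeriv_zero, alpha_zero, Nat.factorial_zero, Nat.cast_zero, Nat.cast_one]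
    unfold Gf
    rw [h1y, Real.inv_rpow hu.le, ← Real.rpow_neg hu.le, ← Real.rpow_add hu]
    norm_num
    congr 1
    ring
  | succ n ih =>
    intro X
    have hq : (0:ℝ) < N + X^2 := by positivity
    have hu : (0:ℝ) < 1 + X^2/N := by positivity
    have hsq : 0 < Real.sqrt (N + X^2) := Real.sqrt_pos.mpr hq
    set y := X / Real.sqrt (N + X^2) with hy
    have hyI : y ∈ Ioo (-1:ℝ) 1 := y_mem N hN X
    have hyu : (1 - y^2) * (1 + X^2/N) = 1 := y_sq N hN X
    rw [iteratedDeriv_succ]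
    have hfun : iteratedDeriv n (fun t : ℝ => (1 + t^2/N)^(-N))
        = fun Y => ((n.factorial : ℝ) * alphaConst n N / N ^ ((n:ℝ)/2))
            * ((1 + Y^2/N) ^ (-(((n:ℝ)+1)/2))
              * iteratedDeriv n (Gf N n) (Y / Real.sqrt (N + Y^2))) := funext ih
    rw [hfun]
    -- derivative computation
    have h_u : HasDerivAt (fun Y : ℝ => 1 + Y^2/N) (2*X/N) X := by
      have := ((hasDerivAt_pow 2 X).div_const N).const_add 1
      norm_num [-hasDerivAt_const_add_iff] at this
      convert this using 1
      try ring
    have h_up : HasDerivAt (fun Y : ℝ => (1 + Y^2/N) ^ (-(((n:ℝ)+1)/2)))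
        (2*X/N * (-(((n:ℝ)+1)/2)) * (1 + X^2/N) ^ ((-(((n:ℝ)+1)/2)) - 1)) X :=
      h_u.rpow_const (Or.inl hu.ne')
    have h_q : HasDerivAt (fun Y : ℝ => N + Y^2) (2*X) X := by
      have := (hasDerivAt_pow 2 X).const_add N
      norm_num [-hasDerivAt_const_add_iff] at this
      convert this using 1
      try ring
    have h_sq := h_q.sqrt hq.ne'
    have h_yd : HasDerivAt (fun Y : ℝ => Y / Real.sqrt (N + Y^2))
        ((1 * Real.sqrt (N + X^2) - X * (2*X / (2 * Real.sqrt (N + X^2)))) /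
          (Real.sqrt (N + X^2))^2) X :=
      (hasDerivAt_id' X).div h_sq hsq.ne'
    have hydval : (1 * Real.sqrt (N + X^2) - X * (2*X / (2 * Real.sqrt (N + X^2)))) /
          (Real.sqrt (N + X^2))^2 = N / (Real.sqrt (N + X^2))^3 := by
      have h2 : (Real.sqrt (N + X^2))^2 = N + X^2 := Real.sq_sqrt hq.le
      have hx2 : X * (2*X / (2 * Real.sqrt (N + X^2))) = X^2 / Real.sqrt (N + X^2) := by
        rw [mul_div_mul_left _ _ (two_ne_zero)]
        ring
      have hkey : (1 * Real.sqrt (N + X^2) - X * (2*X / (2 * Real.sqrt (N + X^2))))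
          = N / Real.sqrt (N + X^2) := by
        rw [one_mul, hx2, eq_div_iff hsq.ne', sub_mul, div_mul_cancel₀ _ hsq.ne']
        linear_combination h2
      rw [hkey, div_div, ← pow_succ']
    rw [hydval] at h_yd
    have h_A : HasDerivAt (iteratedDeriv n (Gf N n)) (iteratedDeriv (n+1) (Gf N n) y) y :=
      hasDerivAt_iterDeriv isOpen_Ioo (Gf_contDiffOn N n) n hyI
    have h_comp : HasDerivAt (fun Y : ℝ => iteratedDeriv n (Gf N n) (Y / Real.sqrt (N + Y^2)))
        (iteratedDeriv (n+1) (Gf N n) y * (N / (Real.sqrt (N + X^2))^3)) X := by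
      have := h_A.comp X h_yd
      simpa [Function.comp_def] using this
    have htot := (h_up.mul h_comp).const_mul
      ((n.factorial : ℝ) * alphaConst n N / N ^ ((n:ℝ)/2))
    erw [htot.deriv]
    rw [← hy]
    -- algebraic identities
    have hB := Gf_B N n y hyI
    have hP := Gf_leibniz_ode N n n y hyI
    have hAn1 : iteratedDeriv (n+1) (Gf N n) y
        = -((1 + X^2/N) * ((2*N-1) * y * iteratedDeriv n (Gf N n) y
            + (n:ℝ) * ((n:ℝ) + 2*N) * iteratedDeriv (n-1) (Gf N n) y)) := by
      linear_combination (1 + X^2/N) * hP - (iteratedDeriv (n+1) (Gf N n) y) * hyu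
    rw [hB, hAn1, alpha_succ N hN n, Nat.factorial_succ]
    -- power bookkeeping
    have hNp : N ^ ((((n+1):ℕ):ℝ)/2) = N ^ ((n:ℝ)/2) * Real.sqrt N := by
      rw [Real.sqrt_eq_rpow, ← Real.rpow_add hN]
      congr 1
      push_cast
      ring
    have hup2 : (1 + X^2/N) ^ (-((((n+1:ℕ):ℝ) + 1)/2))
        = (1 + X^2/N) ^ (-(((n:ℝ)+1)/2)) / Real.sqrt (1 + X^2/N) := by
      rw [Real.sqrt_eq_rpow, ← Real.rpow_sub hu]
      congr 1
      push_cast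
      ring
    have hup1 : (1 + X^2/N) ^ ((-(((n:ℝ)+1)/2)) - 1)
        = (1 + X^2/N) ^ (-(((n:ℝ)+1)/2)) / (1 + X^2/N) := by
      rw [Real.rpow_sub hu, Real.rpow_one]
    have hsqu : Real.sqrt (N + X^2) = Real.sqrt N * Real.sqrt (1 + X^2/N) := by
      rw [← Real.sqrt_mul hN.le]
      congr 1
      field_simp
    have hX : X = y * (Real.sqrt N * Real.sqrt (1 + X^2/N)) := by
      rw [hy, ← hsqu]
      field_simp
    rw [hNp, hup2, hup1, hsqu]
    set sN := Real.sqrt N with hsNdef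
    set su := Real.sqrt (1 + X^2/N) with hsudef
    set K := N ^ ((n:ℝ)/2) with hKdef
    set R := (1 + X^2/N) ^ (-(((n:ℝ)+1)/2)) with hRdef
    set al := alphaConst n N with haldef
    set An := iteratedDeriv n (Gf N n) y with hAndef
    set Am := iteratedDeriv (n-1) (Gf N n) y with hAmdef
    have hsN2 : sN^2 = N := Real.sq_sqrt hN.le
    have hsu2 : su^2 = 1 + X^2/N := Real.sq_sqrt hu.le
    have hsNpos : 0 < sN := Real.sqrt_pos.mpr hN
    have hsupos : 0 < su := Real.sqrt_pos.mpr hu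
    have hKpos : 0 < K := Real.rpow_pos_of_pos hN _
    have hRpos : 0 < R := Real.rpow_pos_of_pos hu _
    have hfacpos : (0:ℝ) < (n.factorial : ℝ) := by positivity
    have hNn2 : (0:ℝ) < N + 1/2 + n := by positivity
    rw [← hsu2, ← hsN2, hX]
    push_cast
    field_simp
    ring

theorem nagel_identity (N : ℝ) (hN : 0 < N) (n : ℕ) (X : ℝ) :
    relHermite n N X = ((n.factorial : ℝ) / N^((n : ℝ)/2)) * (1 + X^2/N)^((n : ℝ)/2) *
      gegenbauer n N ((X / Real.sqrt N) / Real.sqrt (1 + X^2/N)) := by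
  have hq : (0:ℝ) < N + X^2 := by positivity
  have hu : (0:ℝ) < 1 + X^2/N := by positivity
  have hmain := main_lemma N hN n X
  have hY : (X / Real.sqrt N) / Real.sqrt (1 + X^2/N) = X / Real.sqrt (N + X^2) := by
    rw [div_div, ← Real.sqrt_mul hN.le]
    congr 2
    field_simp
  unfold relHermite gegenbauer
  rw [hY, hmain]
  have hGf : (fun t : ℝ => (1 - t^2) ^ ((n:ℝ) + N - 1/2)) = Gf N n := rfl
  rw [hGf]
  have h1y : 1 - (X / Real.sqrt (N + X^2))^2 = (1 + X^2/N)⁻¹ :=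
    eq_inv_of_mul_eq_one_left (y_sq N hN X)
  rw [h1y, Real.inv_rpow hu.le, ← Real.rpow_neg hu.le]
  have hcomb : (1 + X^2/N) ^ (N + (n:ℝ)) * (1 + X^2/N) ^ (-(((n:ℝ)+1)/2))
      = (1 + X^2/N) ^ ((n:ℝ)/2) * (1 + X^2/N) ^ (-((1:ℝ)/2 - N)) := by
    rw [← Real.rpow_add hu, ← Real.rpow_add hu]
    congr 1
    ring
  linear_combination ((-1:ℝ)^n * (n.factorial : ℝ) * alphaConst n N / N ^ ((n:ℝ)/2)
      * iteratedDeriv n (Gf N n) (X / Real.sqrt (N + X^2))) * hcomb
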